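/- Let G be a finite simple graph with n vertices and let H = H(G) be the graph obtained from G by one step of the half-model. Then the clique number of H satisfies ω(H) ≥ min(⌊n/2⌋ + 1, ω(G) + 1). -/

import Mathlib

open SimpleGraph

/-- The set of "clones": one new vertex for each subset of `V` of size `⌊|V|/2⌋`. -/
abbrev halfClones (V : Type) [Fintype V] [DecidableEq V] : Type :=
  {S : Finset V // S.card = Fintype.card V / 2}

/-- One step of the half-model: old vertices keep their adjacencies; the clone `v_S`
is adjacent exactly to the members of `S`; clones form an independent set. -/
def halfStep {V : Type} [Fintype V] [DecidableEq V] (G : SimpleGraph V) :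
    SimpleGraph (V ⊕ halfClones V) where
  Adj x y :=
    match x, y with
    | Sum.inl u, Sum.inl v => G.Adj u v
    | Sum.inl u, Sum.inr S => u ∈ S.1
    | Sum.inr S, Sum.inl u => u ∈ S.1
    | Sum.inr _, Sum.inr _ => False
  symm := ⟨by
    rintro (u | S) (v | T) h
    · exact G.adj_symm h
    · exact h
    · exact h
    · exact h.elim⟩
  loopless := ⟨by
    rintro (u | S) h
    · exact G.irrefl h
    · exact h.elim⟩

instance halfStep.instDecidableRelAdj {V : Type} [Fintype V] [DecidableEq V]
    (G : SimpleGraph V) [DecidableRel G.Adj] : DecidableRel (halfStep G).Adj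
  | Sum.inl u, Sum.inl v => inferInstanceAs (Decidable (G.Adj u v))
  | Sum.inl u, Sum.inr S => inferInstanceAs (Decidable (u ∈ S.1))
  | Sum.inr S, Sum.inl u => inferInstanceAs (Decidable (u ∈ S.1))
  | Sum.inr _, Sum.inr _ => inferInstanceAs (Decidable False)

/-- the clique number of `H = H(G)` satisfies
`ω(H) ≥ min(⌊n/2⌋ + 1, ω(G) + 1)`. -/
theorem stmt_12 {V : Type} [Fintype V] [DecidableEq V] (G : SimpleGraph V) :
    min (Fintype.card V / 2 + 1) (G.cliqueNum + 1) ≤ (halfStep G).cliqueNum := by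
  obtain ⟨t, ht⟩ := G.exists_isNClique_cliqueNum
  set m := min (Fintype.card V / 2) G.cliqueNum with hm
  obtain ⟨t', ht't, ht'card⟩ := Finset.exists_subset_card_eq (s := t) (n := m)
    (by rw [ht.card_eq]; exact min_le_right _ _)
  obtain ⟨S, hS, hScard⟩ := Finset.exists_superset_card_eq (s := t') (n := Fintype.card V / 2)
    (ht'card ▸ min_le_left _ _)
    (le_trans (Nat.div_le_self _ _) (by simpa using Finset.card_le_univ (Finset.univ : Finset V)))
  let c : V ⊕ halfClones V := Sum.inr ⟨S, hScard⟩
  have hclique : (halfStep G).IsClique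
      ((insert c (t'.image (Sum.inl : V → V ⊕ halfClones V)) : Finset (V ⊕ halfClones V)) : Set (V ⊕ halfClones V)) := by
    intro x hx y hy hxy
    simp only [Finset.coe_insert, Set.mem_insert_iff, Finset.coe_image, Set.mem_image,
      Finset.mem_coe] at hx hy
    rcases hx with rfl | ⟨u, hu, rfl⟩ <;> rcases hy with rfl | ⟨v, hv, rfl⟩
    · exact absurd rfl hxy
    · exact hS hv
    · exact hS hu
    · exact ht.isClique (ht't hu) (ht't hv) (fun h => hxy (by rw [h]))
  have hcard : (insert c (t'.image (Sum.inl : V → V ⊕ halfClones V))).card = m + 1 := by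
    rw [Finset.card_insert_of_notMem (by simp [c]),
      Finset.card_image_of_injective _ Sum.inl_injective, ht'card]
  have := hclique.card_le_cliqueNum
  rw [hcard] at this
  have h2 : (Fintype.card V / 2 + 1) ⊓ (G.cliqueNum + 1) = m + 1 := by omega
  rw [h2]; exact this
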